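/- For the Hunt–Szymanski threshold structure built from a list L, the number of nonempty lists T_k equals the length of a longest strictly increasing subsequence of L; more precisely, Min(T_k) is the smallest possible last element over all strictly increasing subsequences of L of length k. -/

import Mathlib

noncomputable def lisLen (L : List ℕ) : ℕ :=
  sSup {n | ∃ w : List ℕ, w.Sublist L ∧ w.Pairwise (· < ·) ∧ w.length = n}

def insertTails : List ℕ → ℕ → List ℕ
  | [], x => [x]
  | t :: ts, x => if x ≤ t then x :: ts else t :: insertTails ts x

def tails (L : List ℕ) : List ℕ := L.foldl insertTails []

/-- `S L k v`: there is a strictly increasing subsequence of `L` of length `k+1`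
ending with `v`. -/
def SP (L : List ℕ) (k v : ℕ) : Prop :=
  ∃ w : List ℕ, w.Sublist L ∧ w.Pairwise (· < ·) ∧ w.length = k + 1 ∧ w.getLast? = some v

lemma decomp {w : List ℕ} {v : ℕ} (hl : w.getLast? = some v) : w = w.dropLast ++ [v] := by
  have hne : w ≠ [] := by rintro rfl; simp at hl
  rw [List.getLast?_eq_getLast hne] at hl
  rw [← Option.some.inj hl]
  exact (List.dropLast_append_getLast hne).symm

lemma le_of_mem_sorted {w : List ℕ} (ho : w.Pairwise (· < ·)) {u : ℕ}
    (hla : w.getLast? = some u) {a : ℕ} (ha : a ∈ w) : a ≤ u := by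
  have hd := decomp hla
  rw [hd] at ho ha
  rcases List.mem_append.mp ha with h | h
  · exact le_of_lt ((List.pairwise_append.mp ho).2.2 a h u (by simp))
  · simp at h; omega

lemma SP_concat {L : List ℕ} {x k v : ℕ} :
    SP (L ++ [x]) k v ↔ SP L k v ∨ (v = x ∧ (k = 0 ∨ ∃ u, u < x ∧ SP L (k - 1) u)) := by
  constructor
  · rintro ⟨w, hsub, hsort, hlen, hlast⟩
    rcases List.sublist_append_iff.mp hsub with ⟨w₁, w₂, rfl, h₁, h₂⟩
    rcases List.sublist_singleton.mp h₂ with rfl | rfl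
    · left
      exact ⟨w₁, by simpa using h₁, by simpa using hsort, by simpa using hlen,
        by simpa using hlast⟩
    · have hvx : v = x := by
        rw [List.getLast?_concat] at hlast; exact (Option.some.inj hlast).symm
      right
      refine ⟨hvx, ?_⟩
      rcases eq_or_ne w₁ [] with rfl | hne
      · left; simpa using hlen
      · right
        have hlast₁ := List.getLast?_eq_getLast hne
        have hlen₁ : w₁.length = k := by
          have : w₁.length + 1 = k + 1 := by simpa using hlen
          omega
        have hk1 : 1 ≤ k := by
          have := List.length_pos_iff.mpr hne; omega
        refine ⟨w₁.getLast hne, ?_, w₁, h₁, (List.pairwise_append.mp hsort).1, by omega, hlast₁⟩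
        exact (List.pairwise_append.mp hsort).2.2 _ (List.getLast_mem hne) x (by simp)
  · rintro (⟨w, hs, ho, hl, hla⟩ | ⟨rfl, hk⟩)
    · exact ⟨w, hs.trans (List.sublist_append_left _ _), ho, hl, hla⟩
    · rcases Nat.eq_zero_or_pos k with rfl | hkpos
      · exact ⟨[v], List.sublist_append_right _ _, List.pairwise_singleton _ v, rfl, rfl⟩
      · rcases hk with rfl | ⟨u, hux, w, hs, ho, hl, hla⟩
        · omega
        · refine ⟨w ++ [v], hs.append (List.Sublist.refl _), ?_, by simp [hl]; omega,
            List.getLast?_concat⟩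
          refine List.pairwise_append.mpr ⟨ho, List.pairwise_singleton _ _, ?_⟩
          intro a ha b hb
          simp only [List.mem_singleton] at hb
          subst hb
          exact lt_of_le_of_lt (le_of_mem_sorted ho hla ha) hux

lemma insertTails_of_forall_lt {T : List ℕ} {x : ℕ} (h : ∀ t ∈ T, t < x) :
    insertTails T x = T ++ [x] := by
  induction T with
  | nil => rfl
  | cons t ts ih =>
    simp only [insertTails]
    rw [if_neg (not_le.mpr (h t (by simp)))]
    simp [ih fun a ha => h a (by simp [ha])]

lemma insertTails_set {T : List ℕ} {x k₀ : ℕ} (hk : k₀ < T.length)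
    (h1 : x ≤ T[k₀]) (h2 : ∀ j (hj : j < k₀), T[j]'(lt_trans hj hk) < x) :
    insertTails T x = T.set k₀ x := by
  induction T generalizing k₀ with
  | nil => simp at hk
  | cons t ts ih =>
    cases k₀ with
    | zero =>
      simp only [insertTails]
      rw [if_pos (by simpa using h1)]
      rfl
    | succ j =>
      have ht : t < x := by simpa using h2 0 (Nat.succ_pos j)
      simp only [insertTails]
      rw [if_neg (not_le.mpr ht)]
      have hk' : j < ts.length := by simpa using hk
      rw [List.set_cons_succ]
      congr 1
      exact ih hk' (by simpa using h1) (fun i hi => by simpa using h2 (i + 1) (by omega))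

lemma sorted_set {T : List ℕ} (hT : T.Pairwise (· < ·)) {x k₀ : ℕ} (hk : k₀ < T.length)
    (h1 : x ≤ T[k₀]) (h2 : ∀ j (hj : j < k₀), T[j]'(lt_trans hj hk) < x) :
    (T.set k₀ x).Pairwise (· < ·) := by
  have hmono : ∀ a b (ha : a < T.length) (hb : b < T.length), a < b → T[a] < T[b] :=
    fun a b ha hb hab => List.pairwise_iff_getElem.mp hT a b ha hb hab
  rw [List.pairwise_iff_getElem]
  intro i j hi hj hij
  simp only [List.length_set] at hi hj
  rw [List.getElem_set, List.getElem_set]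
  split_ifs with hik hjk hjk
  · omega
  · subst hik
    exact lt_of_le_of_lt h1 (hmono _ _ hk hj hij)
  · subst hjk
    exact h2 i hij
  · exact hmono _ _ hi hj hij

/-- The full invariant. -/
def InvP (L T : List ℕ) : Prop :=
  T.Pairwise (· < ·) ∧
  (∀ k (hk : k < T.length), IsLeast {v | SP L k v} (T[k]'hk)) ∧
  (∀ k v, SP L k v → k < T.length)

lemma invp_nil : InvP [] [] := by
  refine ⟨List.Pairwise.nil, fun k hk => by simp at hk, fun k v ⟨w, hs, _, hl, _⟩ => ?_⟩
  have := List.sublist_nil.mp hs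
  subst this
  simp at hl

lemma invp_step {L T : List ℕ} (x : ℕ) (h : InvP L T) : InvP (L ++ [x]) (insertTails T x) := by
  obtain ⟨hsort, hLst, hC⟩ := h
  by_cases hall : ∀ t ∈ T, t < x
  · -- append case
    rw [insertTails_of_forall_lt hall]
    refine ⟨?_, ?_, ?_⟩
    · exact List.pairwise_append.mpr ⟨hsort, List.pairwise_singleton _ _,
        fun a ha b hb => by simp only [List.mem_singleton] at hb; subst hb; exact hall a ha⟩
    · intro k hk
      simp only [List.length_append, List.length_singleton] at hk
      rcases lt_or_eq_of_le (Nat.lt_succ_iff.mp hk) with hkl | hke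
      · -- k < T.length : value unchanged
        rw [List.getElem_append_left hkl]
        obtain ⟨hmem, hlb⟩ := hLst k hkl
        constructor
        · exact SP_concat.mpr (Or.inl hmem)
        · intro v hv
          rcases SP_concat.mp hv with hv | ⟨rfl, _⟩
          · exact hlb hv
          · exact le_of_lt (hall _ (List.getElem_mem hkl))
      · -- k = T.length : new entry x
        rw [List.getElem_concat_length hke]
        constructor
        · refine SP_concat.mpr (Or.inr ⟨rfl, ?_⟩)
          rcases Nat.eq_zero_or_pos k with rfl | hkpos
          · exact Or.inl rfl
          · refine Or.inr ⟨T[k-1]'(by omega), ?_, (hLst (k-1) (by omega)).1⟩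
            exact hall _ (List.getElem_mem (by omega))
        · intro v hv
          rcases SP_concat.mp hv with hv | ⟨rfl, _⟩
          · exact absurd (hC _ _ hv) (by omega)
          · exact le_refl _
    · intro k v hv
      simp only [List.length_append, List.length_singleton]
      rcases SP_concat.mp hv with hv | ⟨rfl, rfl | ⟨u, hux, hu⟩⟩
      · exact lt_trans (hC _ _ hv) (by omega)
      · omega
      · have := hC _ _ hu; omega
  · -- set case
    push_neg at hall
    obtain ⟨t₀, ht₀, hxt₀⟩ := hall
    have hex : ∃ j, ∃ (hj : j < T.length), x ≤ T[j] := by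
      obtain ⟨j, hj, rfl⟩ := List.getElem_of_mem ht₀
      exact ⟨j, hj, hxt₀⟩
    classical
    obtain ⟨k₀, hk₀lt, hk₀x, hbelow⟩ :
        ∃ k₀, ∃ (h : k₀ < T.length), x ≤ T[k₀] ∧
          ∀ j (hj : j < k₀), T[j]'(lt_trans hj h) < x := by
      obtain ⟨h1, h2⟩ := Nat.find_spec hex
      refine ⟨Nat.find hex, h1, h2, ?_⟩
      intro j hj
      by_contra hcon
      exact Nat.find_min hex hj ⟨lt_trans hj h1, not_lt.mp hcon⟩
    rw [insertTails_set hk₀lt hk₀x hbelow]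
    have hmono : ∀ a b (ha : a < T.length) (hb : b < T.length), a < b → T[a] < T[b] :=
      fun a b ha hb hab => List.pairwise_iff_getElem.mp hsort a b ha hb hab
    refine ⟨sorted_set hsort hk₀lt hk₀x hbelow, ?_, ?_⟩
    · intro k hk
      have hk' : k < T.length := by simpa using hk
      rw [List.getElem_set]
      by_cases hkk : k₀ = k
      · subst hkk
        rw [if_pos rfl]
        constructor
        · refine SP_concat.mpr (Or.inr ⟨rfl, ?_⟩)
          rcases Nat.eq_zero_or_pos k₀ with h0 | hpos
          · exact Or.inl h0
          · exact Or.inr ⟨T[k₀-1]'(by omega), hbelow (k₀-1) (by omega),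
              (hLst (k₀-1) (by omega)).1⟩
        · intro v hv
          rcases SP_concat.mp hv with hv | ⟨rfl, _⟩
          · exact le_trans hk₀x ((hLst k₀ hk₀lt).2 hv)
          · exact le_refl _
      · rw [if_neg hkk]
        obtain ⟨hmem, hlb⟩ := hLst k hk'
        constructor
        · exact SP_concat.mpr (Or.inl hmem)
        · intro v hv
          rcases SP_concat.mp hv with hv | ⟨rfl, rfl | ⟨u, hux, hu⟩⟩
          · exact hlb hv
          · -- k = 0 and k ≠ k₀, so k₀ > 0, and T[k] < x by hbelow
            exact le_of_lt (hbelow 0 (by omega))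
          · -- v = x; show T[k] ≤ x
            rcases lt_or_gt_of_ne (Ne.symm hkk) with hlt | hgt
            · exact le_of_lt (hbelow k hlt)
            · -- k > k₀ : contradiction
              exfalso
              have hku : k - 1 < T.length := by omega
              have h1 : T[k-1]'hku ≤ u := (hLst (k-1) hku).2 hu
              have h2 : T[k₀] ≤ T[k-1]'hku := by
                rcases eq_or_lt_of_le (by omega : k₀ ≤ k - 1) with he | hl
                · exact le_of_eq (by congr 1)
                · exact le_of_lt (hmono _ _ hk₀lt hku hl)
              omega
    · intro k v hv
      simp only [List.length_set]
      rcases SP_concat.mp hv with hv | ⟨rfl, rfl | ⟨u, hux, hu⟩⟩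
      · exact hC _ _ hv
      · omega
      · have hk1 : k - 1 < T.length := hC _ _ hu
        rcases lt_or_eq_of_le (by omega : k ≤ T.length) with h | h
        · exact h
        · exfalso
          have hku : k - 1 < T.length := by omega
          have h1 : T[k-1]'hku ≤ u := (hLst (k-1) hku).2 hu
          have h2 : T[k₀] ≤ T[k-1]'hku := by
            rcases eq_or_lt_of_le (by omega : k₀ ≤ k - 1) with he | hl
            · exact le_of_eq (by congr 1)
            · exact le_of_lt (hmono _ _ hk₀lt hku hl)
          omega

lemma invp_tails (L : List ℕ) : InvP L (tails L) := by
  induction L using List.reverseRecOn with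
  | nil => exact invp_nil
  | append_singleton L x ih =>
    have : tails (L ++ [x]) = insertTails (tails L) x := by
      simp [tails, List.foldl_concat]
    rw [this]
    exact invp_step x ih

theorem threshold_structure_correct (L : List ℕ) :
    (tails L).length = lisLen L ∧
    ∀ k (hk : k < (tails L).length),
      IsLeast {v | ∃ w : List ℕ, w.Sublist L ∧ w.Pairwise (· < ·) ∧
        w.length = k + 1 ∧ w.getLast? = some v} ((tails L)[k]'hk) := by
  obtain ⟨hsort, hLst, hC⟩ := invp_tails L
  refine ⟨?_, hLst⟩
  have hset : {n | ∃ w : List ℕ, w.Sublist L ∧ w.Pairwise (· < ·) ∧ w.length = n}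
      = Set.Iic (tails L).length := by
    ext n
    simp only [Set.mem_setOf_eq, Set.mem_Iic]
    constructor
    · rintro ⟨w, hs, ho, rfl⟩
      rcases eq_or_ne w [] with rfl | hne
      · simp
      · have hla := List.getLast?_eq_getLast hne
        have hwp : 1 ≤ w.length := List.length_pos_iff.mpr hne
        have : SP L (w.length - 1) (w.getLast hne) := ⟨w, hs, ho, by omega, hla⟩
        have := hC _ _ this
        omega
    · intro hn
      rcases Nat.eq_zero_or_pos n with rfl | hpos
      · exact ⟨[], List.nil_sublist L, List.Pairwise.nil, rfl⟩
      · have hk : n - 1 < (tails L).length := by omega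
        obtain ⟨w, hs, ho, hl, _⟩ := (hLst (n-1) hk).1
        exact ⟨w, hs, ho, by omega⟩
  rw [lisLen, hset, csSup_Iic]
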